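/- For every τ ∈ A₀, the system S_τ satisfies the open set condition: for every b ∈ I_τ, φ_b maps the open ball B(1/2, 1/2) = Int(X) into Int(X), and for all distinct b, b′ ∈ I_τ the images φ_b(Int(X)) and φ_{b′}(Int(X)) are disjoint. -/

import Mathlib

open Complex Metric Filter Set
open scoped ENNReal NNReal Topology

noncomputable section

/-- The parameter space `A₀ = {u+iv : u ≥ 0, v ≥ 1}`. -/
def A0 : Set ℂ := {τ : ℂ | 0 ≤ τ.re ∧ 1 ≤ τ.im}

/-- The phase space `X = {z : |z - 1/2| ≤ 1/2}`. -/
def Xcl : Set ℂ := {z : ℂ | ‖z - 1/2‖ ≤ 1/2}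

/-- The alphabet `I_τ = {m + nτ : m, n ∈ ℕ₊}`. -/
def Itau (τ : ℂ) : Set ℂ := {b : ℂ | ∃ m n : ℕ+, b = ((m : ℕ) : ℂ) + ((n : ℕ) : ℂ) * τ}

/-- The generator `φ_b(z) = 1/(z+b)`. -/
def phi (b z : ℂ) : ℂ := 1 / (z + b)

lemma mem_ball_re (z : ℂ) (hz : z ∈ ball (1/2 : ℂ) (1/2)) :
    0 < z.re ∧ z.re < 1 ∧ |z.im| < 1/2 := by
  rw [mem_ball, Complex.dist_eq] at hz
  have hre : |(z - 1/2).re| ≤ ‖z - 1/2‖ := Complex.abs_re_le_norm _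
  have him : |(z - 1/2).im| ≤ ‖z - 1/2‖ := Complex.abs_im_le_norm _
  simp only [Complex.sub_re, Complex.sub_im] at hre him
  norm_num at hre him
  rw [abs_le] at hre him
  refine ⟨by nlinarith [hre.1], by nlinarith [hre.2], ?_⟩
  rw [abs_lt]
  constructor <;> nlinarith [him.1, him.2]

lemma one_div_mem_ball (w : ℂ) (hw : 1 < w.re) : 1 / w ∈ ball (1/2 : ℂ) (1/2) := by
  have hw0 : w ≠ 0 := by
    intro h; rw [h] at hw; simp at hw; linarith
  rw [mem_ball, Complex.dist_eq]
  have he : 1 / w - 1/2 = (2 - w) / (2 * w) := by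
    rw [div_sub_div _ _ hw0 two_ne_zero, one_mul, mul_one, mul_comm]
  rw [he, norm_div, norm_mul]
  have habs : ‖w‖ > 0 := norm_pos_iff.mpr hw0
  have h3 : ‖(2:ℂ)‖ = 2 := by norm_num
  rw [h3, div_lt_iff₀ (mul_pos two_pos habs)]
  have hsq : ‖2 - w‖^2 < ‖w‖^2 := by
    rw [Complex.sq_norm, Complex.sq_norm, Complex.normSq_apply, Complex.normSq_apply]
    simp only [Complex.sub_re, Complex.sub_im]
    norm_num
    nlinarith
  have h2 : ‖2 - w‖ < ‖w‖ := by
    nlinarith [norm_nonneg (2 - w), norm_nonneg w]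
  linarith

lemma nat_abs_lt_one (a b : ℕ) (h : |(a : ℝ) - b| < 1) : a = b := by
  rw [abs_lt] at h
  have h1 : (a : ℝ) < b + 1 := by linarith [h.2]
  have h2 : (b : ℝ) < a + 1 := by linarith [h.1]
  have h1' : a < b + 1 := by exact_mod_cast h1
  have h2' : b < a + 1 := by exact_mod_cast h2
  omega

/-- The open set condition for `S_τ`. -/
theorem stmt2 :
    ∀ τ ∈ A0,
      ball (1/2 : ℂ) (1/2) = interior Xcl ∧
      (∀ b ∈ Itau τ, (fun z => 1 / (z + b)) '' ball (1/2 : ℂ) (1/2) ⊆ ball (1/2 : ℂ) (1/2)) ∧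
      (∀ b ∈ Itau τ, ∀ b' ∈ Itau τ, b ≠ b' →
        Disjoint ((fun z => 1 / (z + b)) '' ball (1/2 : ℂ) (1/2))
          ((fun z => 1 / (z + b')) '' ball (1/2 : ℂ) (1/2))) := by
  intro τ hτ
  obtain ⟨hτre, hτim⟩ := hτ
  have hb_re : ∀ b ∈ Itau τ, 1 ≤ b.re := by
    rintro b ⟨m, n, rfl⟩
    simp only [Complex.add_re, Complex.mul_re, Complex.natCast_re, Complex.natCast_im]
    have hm : (1 : ℝ) ≤ (m : ℕ) := by exact_mod_cast m.one_le
    have hn : (1 : ℝ) ≤ (n : ℕ) := by exact_mod_cast n.one_le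
    nlinarith
  refine ⟨?_, ?_, ?_⟩
  · have hX : Xcl = closedBall (1/2 : ℂ) (1/2) := by
      ext z
      simp [Xcl, mem_closedBall, Complex.dist_eq, Complex.norm_def]
    rw [hX, interior_closedBall _ (by norm_num)]
  · rintro b hb w ⟨z, hz, rfl⟩
    have hz' := mem_ball_re z hz
    exact one_div_mem_ball (z + b) (by
      rw [Complex.add_re]; have := hb_re b hb; linarith [hz'.1])
  · rintro b ⟨m, n, rfl⟩ b' ⟨m', n', rfl⟩ hne
    rw [Set.disjoint_left]
    rintro w ⟨z, hz, hwz⟩ ⟨z', hz', hwz'⟩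
    apply hne
    set b : ℂ := ((m : ℕ) : ℂ) + ((n : ℕ) : ℂ) * τ with hbdef
    set b' : ℂ := ((m' : ℕ) : ℂ) + ((n' : ℕ) : ℂ) * τ with hbdef'
    have hbmem : b ∈ Itau τ := ⟨m, n, rfl⟩
    have hbmem' : b' ∈ Itau τ := ⟨m', n', rfl⟩
    have h1 : 1 < (z + b).re := by
      rw [Complex.add_re]; linarith [(mem_ball_re z hz).1, hb_re b hbmem]
    have h1' : 1 < (z' + b').re := by
      rw [Complex.add_re]; linarith [(mem_ball_re z' hz').1, hb_re b' hbmem']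
    have hzb : z + b ≠ 0 := by intro h; rw [h] at h1; simp at h1; linarith
    have hzb' : z' + b' ≠ 0 := by intro h; rw [h] at h1'; simp at h1'; linarith
    have heq : z + b = z' + b' := by
      have h := hwz.trans hwz'.symm
      simp only [one_div, inv_inj] at h
      exact h
    have himz := (mem_ball_re z hz).2.2
    have himz' := (mem_ball_re z' hz').2.2
    have hrez := mem_ball_re z hz
    have hrez' := mem_ball_re z' hz'
    -- imaginary parts
    have him : z.im + (n : ℕ) * τ.im = z'.im + (n' : ℕ) * τ.im := by
      have := congrArg Complex.im heq
      simpa [hbdef, hbdef', Complex.add_im, Complex.mul_im] using this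
    have hnn : (n : ℕ) = (n' : ℕ) := by
      apply nat_abs_lt_one
      have hfac : ((n : ℕ) : ℝ) - (n' : ℕ) = (z'.im - z.im) / τ.im := by
        field_simp
        nlinarith [him]
      rw [hfac, abs_div, abs_of_pos (by linarith : (0:ℝ) < τ.im),
        div_lt_one (by linarith : (0:ℝ) < τ.im)]
      have : |z'.im - z.im| < 1 := by
        rw [abs_lt] at himz himz' ⊢
        constructor <;> linarith [himz.1, himz.2, himz'.1, himz'.2]
      linarith
    -- real parts
    have hre : z.re + ((m : ℕ) + (n : ℕ) * τ.re) = z'.re + ((m' : ℕ) + (n' : ℕ) * τ.re) := by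
      have := congrArg Complex.re heq
      simpa [hbdef, hbdef', Complex.add_re, Complex.mul_re] using this
    have hmm : (m : ℕ) = (m' : ℕ) := by
      apply nat_abs_lt_one
      rw [abs_lt]
      rw [hnn] at hre
      constructor <;> nlinarith [hrez.1, hrez.2.1, hrez'.1, hrez'.2.1]
    rw [hbdef, hbdef', hmm, hnn]
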